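/- Over a field of characteristic not 2 or 3 containing z with z ≠ 0, the curve y^3 = t(1-t)^2(1-zt) is birationally equivalent to the curve Y^2 = X^6 + 2(1-2z)X^3 + 1. -/

import Mathlib

open MvPolynomial

/-- Two affine plane curves `C₁`, `C₂` over a field `K` are birationally equivalent if there
are rational maps (given componentwise by ratios of two-variable polynomials) in both
directions, defined away from finitely many points of the curves, mapping one curve into the
other and inverse to each other where defined. -/
def IsBirationallyEquivalent (K : Type*) [Field K] (C₁ C₂ : K → K → Prop) : Prop :=
  ∃ (p₁ q₁ p₂ q₂ u₁ v₁ u₂ v₂ : MvPolynomial (Fin 2) K) (E₁ E₂ : Set (K × K)),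
    E₁.Finite ∧ E₂.Finite ∧
    (∀ x y : K, C₁ x y → (x, y) ∉ E₁ →
      eval ![x, y] q₁ ≠ 0 ∧ eval ![x, y] q₂ ≠ 0 ∧
      C₂ (eval ![x, y] p₁ / eval ![x, y] q₁) (eval ![x, y] p₂ / eval ![x, y] q₂)) ∧
    (∀ x y : K, C₂ x y → (x, y) ∉ E₂ →
      eval ![x, y] v₁ ≠ 0 ∧ eval ![x, y] v₂ ≠ 0 ∧
      C₁ (eval ![x, y] u₁ / eval ![x, y] v₁) (eval ![x, y] u₂ / eval ![x, y] v₂)) ∧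
    (∀ x y : K, C₁ x y → (x, y) ∉ E₁ →
      ∀ x' y' : K, x' = eval ![x, y] p₁ / eval ![x, y] q₁ →
        y' = eval ![x, y] p₂ / eval ![x, y] q₂ → (x', y') ∉ E₂ →
        eval ![x', y'] u₁ / eval ![x', y'] v₁ = x ∧
        eval ![x', y'] u₂ / eval ![x', y'] v₂ = y) ∧
    (∀ x y : K, C₂ x y → (x, y) ∉ E₂ →
      ∀ x' y' : K, x' = eval ![x, y] u₁ / eval ![x, y] v₁ →
        y' = eval ![x, y] u₂ / eval ![x, y] v₂ → (x', y') ∉ E₁ →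
        eval ![x', y'] p₁ / eval ![x', y'] q₁ = x ∧
        eval ![x', y'] p₂ / eval ![x', y'] q₂ = y)

/-- Over a field of characteristic not `2` or `3` containing `z ≠ 0`, the curve
`y³ = t(1-t)²(1-zt)` is birationally equivalent to the curve `Y² = X⁶ + 2(1-2z)X³ + 1`. -/
theorem curve_birational_to_sextic {K : Type*} [Field K]
    (h2 : (2 : K) ≠ 0) (h3 : (3 : K) ≠ 0) (z : K) (hz : z ≠ 0) :
    IsBirationallyEquivalent K
      (fun t y => y ^ 3 = t * (1 - t) ^ 2 * (1 - z * t))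
      (fun X Y => Y ^ 2 = X ^ 6 + 2 * (1 - 2 * z) * X ^ 3 + 1) := by
  refine ⟨1 - X 0, X 1,
    C (2*z) * X 0 - C z * X 0^2 - 1, X 0 - C z * X 0^2,
    X 0^3 + 1 + X 1, C (2*z) * X 0^3,
    C (2*z-1) * X 0^3 - 1 - X 1, C (2*z) * X 0^4,
    {((0:K),(0:K)), (1,0), (z⁻¹,0)}, {((0:K),(1:K)), (0,-1)},
    Set.toFinite _, Set.toFinite _, ?_, ?_, ?_, ?_⟩
  · -- C₁ → C₂
    intro t y hC hE
    simp only [Set.mem_insert_iff, Set.mem_singleton_iff, Prod.mk.injEq, not_or] at hE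
    simp only [map_sub, map_add, map_mul, map_pow, map_one, eval_C, eval_X,
      Matrix.cons_val_zero, Matrix.cons_val_one, Matrix.head_cons]
    have ht0 : t ≠ 0 := by
      rintro rfl
      exact hE.1 ⟨rfl, by simpa using hC⟩
    have h1t : (1:K) - t ≠ 0 := by
      intro h
      have ht1 : t = 1 := (sub_eq_zero.mp h).symm
      subst ht1
      exact hE.2.1 ⟨rfl, by simpa using hC⟩
    have hzt : (1:K) - z * t ≠ 0 := by
      intro h
      have hzt1 : t * z = 1 := by linear_combination -h
      have ht1 : t = z⁻¹ := eq_inv_of_mul_eq_one_left hzt1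
      subst ht1
      exact hE.2.2 ⟨rfl, by simpa [mul_inv_cancel₀ hz] using hC⟩
    have hy : y ≠ 0 := by
      intro h
      rw [h] at hC
      have h0 : t * (1 - t) ^ 2 * (1 - z * t) = 0 := by rw [← hC]; norm_num
      rcases mul_eq_zero.mp h0 with h' | h'
      · rcases mul_eq_zero.mp h' with h'' | h''
        · exact ht0 h''
        · exact h1t (pow_eq_zero_iff (by norm_num) |>.mp h'' )
      · exact hzt h'
    have hden : t - z * t^2 ≠ 0 := by
      intro h
      apply hzt
      have : t * (1 - z*t) = 0 := by linear_combination h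
      rcases mul_eq_zero.mp this with h'|h'
      · exact absurd h' ht0
      · exact h'
    refine ⟨hy, hden, ?_⟩
    have hX3 : ((1-t)/y)^3 = (1-t)/(t*(1-z*t)) := by
      rw [div_pow, hC]
      field_simp
    have h6 : ((1-t)/y)^6 = (((1-t)/y)^3)^2 := by ring
    rw [h6, hX3]
    have htz : t * (1 - z*t) ≠ 0 := mul_ne_zero ht0 hzt
    field_simp
    ring
  · -- C₂ → C₁
    intro Xv Y hC hE
    simp only [Set.mem_insert_iff, Set.mem_singleton_iff, Prod.mk.injEq, not_or] at hE
    simp only [map_sub, map_add, map_mul, map_pow, map_one, eval_C, eval_X,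
      Matrix.cons_val_zero, Matrix.cons_val_one, Matrix.head_cons]
    have hX : Xv ≠ 0 := by
      rintro rfl
      have h1 : Y^2 = 1 := by simpa using hC
      have h0 : (Y - 1) * (Y + 1) = 0 := by linear_combination h1
      rcases mul_eq_zero.mp h0 with h | h
      · exact hE.1 ⟨rfl, sub_eq_zero.mp h⟩
      · exact hE.2 ⟨rfl, eq_neg_of_add_eq_zero_left h⟩
    have hzX3 : 2*z*Xv^3 ≠ 0 := by
      apply mul_ne_zero (mul_ne_zero h2 hz) (pow_ne_zero _ hX)
    have hzX4 : 2*z*Xv^4 ≠ 0 := by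
      apply mul_ne_zero (mul_ne_zero h2 hz) (pow_ne_zero _ hX)
    refine ⟨hzX3, hzX4, ?_⟩
    set t := (Xv^3 + 1 + Y) / (2*z*Xv^3) with ht
    have key : Xv^3 * (t * (1 - z*t)) = 1 - t := by
      rw [ht]
      field_simp
      ring_nf
      linear_combination (-1) * hC
    have hy : ((2*z-1)*Xv^3 - 1 - Y) / (2*z*Xv^4) = (1 - t)/Xv := by
      rw [ht]
      field_simp
      ring
    rw [hy]
    rw [div_pow, div_eq_iff (pow_ne_zero _ hX)]
    linear_combination (-(1-t)^2) * key
  · -- roundtrip starting on C₁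
    intro t y hC hE Xv Y hXd hYd hE2
    simp only [Set.mem_insert_iff, Set.mem_singleton_iff, Prod.mk.injEq, not_or] at hE
    simp only [map_sub, map_add, map_mul, map_pow, map_one, eval_C, eval_X,
      Matrix.cons_val_zero, Matrix.cons_val_one, Matrix.head_cons] at hXd hYd ⊢
    have ht0 : t ≠ 0 := by
      rintro rfl
      exact hE.1 ⟨rfl, by simpa using hC⟩
    have h1t : (1:K) - t ≠ 0 := by
      intro h
      have ht1 : t = 1 := (sub_eq_zero.mp h).symm
      subst ht1
      exact hE.2.1 ⟨rfl, by simpa using hC⟩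
    have hzt : (1:K) - z * t ≠ 0 := by
      intro h
      have hzt1 : t * z = 1 := by linear_combination -h
      have ht1 : t = z⁻¹ := eq_inv_of_mul_eq_one_left hzt1
      subst ht1
      exact hE.2.2 ⟨rfl, by simpa [mul_inv_cancel₀ hz] using hC⟩
    have hy : y ≠ 0 := by
      intro h
      rw [h] at hC
      have h0 : t * (1 - t) ^ 2 * (1 - z * t) = 0 := by rw [← hC]; norm_num
      rcases mul_eq_zero.mp h0 with h' | h'
      · rcases mul_eq_zero.mp h' with h'' | h''
        · exact ht0 h''
        · exact h1t (pow_eq_zero_iff (by norm_num) |>.mp h'')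
      · exact hzt h'
    have hden : t - z * t^2 ≠ 0 := by
      intro h
      apply hzt
      have : t * (1 - z*t) = 0 := by linear_combination h
      rcases mul_eq_zero.mp this with h'|h'
      · exact absurd h' ht0
      · exact h'
    have htz : t * (1 - z*t) ≠ 0 := mul_ne_zero ht0 hzt
    have hX : Xv ≠ 0 := by rw [hXd]; exact div_ne_zero h1t hy
    have hX3 : Xv^3 = (1-t)/(t*(1-z*t)) := by
      rw [hXd, div_pow, hC]
      field_simp
    have hYval : Y = Xv^3*(2*z*t-1) - 1 := by
      rw [hYd, hX3]
      field_simp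
      ring
    constructor
    · rw [hYval]
      field_simp
      try ring
    · rw [hYval, hXd]
      field_simp
      try ring
  · -- roundtrip starting on C₂
    intro Xv Y hC hE t y htd hyd hE1
    simp only [Set.mem_insert_iff, Set.mem_singleton_iff, Prod.mk.injEq, not_or] at hE hE1
    simp only [map_sub, map_add, map_mul, map_pow, map_one, eval_C, eval_X,
      Matrix.cons_val_zero, Matrix.cons_val_one, Matrix.head_cons] at htd hyd ⊢
    have hX : Xv ≠ 0 := by
      rintro rfl
      have h1 : Y^2 = 1 := by simpa using hC
      have h0 : (Y - 1) * (Y + 1) = 0 := by linear_combination h1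
      rcases mul_eq_zero.mp h0 with h | h
      · exact hE.1 ⟨rfl, sub_eq_zero.mp h⟩
      · exact hE.2 ⟨rfl, eq_neg_of_add_eq_zero_left h⟩
    have key : Xv^3 * (t * (1 - z*t)) = 1 - t := by
      rw [htd]
      field_simp
      ring_nf
      linear_combination (-1) * hC
    have hyv : y = (1 - t)/Xv := by
      rw [hyd, htd]
      field_simp
      ring
    have ht0 : t ≠ 0 := by
      rintro rfl
      exact one_ne_zero (by linear_combination -key)
    have h1t : (1:K) - t ≠ 0 := by
      intro h
      have ht1 : t = 1 := (sub_eq_zero.mp h).symm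
      apply hE1.2.1
      refine ⟨ht1, ?_⟩
      rw [hyv, h]
      simp
    have hzt : (1:K) - z * t ≠ 0 := by
      intro h
      apply h1t
      rw [← key, h]
      ring
    have hy0 : y ≠ 0 := by
      rw [hyv]; exact div_ne_zero h1t hX
    have hX3 : Xv^3 = (1-t)/(t*(1-z*t)) := by
      rw [eq_div_iff (mul_ne_zero ht0 hzt)]
      linear_combination key
    have hYval : Y = Xv^3*(2*z*t-1) - 1 := by
      have htd' : t * (2*z*Xv^3) = Xv^3 + 1 + Y := by
        rw [htd]
        field_simp
      linear_combination -htd'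
    constructor
    · rw [hyv]
      field_simp
    · rw [hYval, hX3]
      have hden : t - z * t^2 ≠ 0 := by
        intro h
        apply hzt
        have : t * (1 - z*t) = 0 := by linear_combination h
        rcases mul_eq_zero.mp this with h'|h'
        · exact absurd h' ht0
        · exact h'
      have htz : t * (1 - z*t) ≠ 0 := mul_ne_zero ht0 hzt
      field_simp
      ring
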